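/- Let A be a ring with involution, ε = ±1, and let (K, ψ) be an ε-quadratic form with K a finitely generated projective A-module and ψ: K → K* an A-module morphism such that λ = ψ + ε·ψ* : K → K* is an isomorphism. If L ⊂ K is a lagrangian for the ε-symmetric form (K, λ) (i.e. L is a direct summand with λ(x)(y) = 0 for all x, y ∈ L and L^⊥ = L), then there exists a direct summand L'' ⊂ K with K = L ⊕ L'' such that L'' is also a lagrangian for (K, λ). -/

import Mathlib

/-- Let `A` be a ring with involution, `ε = ±1`, and `(K, ψ)` an `ε`-quadratic form
with `K` a finitely generated projective `A`-module and `ψ` a sesquilinear pairing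
such that `λ(x)(y) = ψ x y + ε·star (ψ y x)` defines an isomorphism `K → K*`.
If `L ⊂ K` is a lagrangian for the `ε`-symmetric form `(K, λ)` (a direct summand
with `λ = 0` on `L × L` and `L^⊥ = L`), then there exists a direct complement
`L''` of `L` in `K` which is also a lagrangian for `(K, λ)`. -/
theorem stmt_15 (A : Type*) [Ring A] [StarRing A] (ε : A) (hε : ε = 1 ∨ ε = -1)
    (K : Type*) [AddCommGroup K] [Module A K]
    [Module.Finite A K] [Module.Projective A K]
    (ψ : K → K → A)
    (hadd₁ : ∀ x x' y : K, ψ (x + x') y = ψ x y + ψ x' y)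
    (hadd₂ : ∀ x y y' : K, ψ x (y + y') = ψ x y + ψ x y')
    (hsmul₁ : ∀ (a : A) (x y : K), ψ (a • x) y = ψ x y * star a)
    (hsmul₂ : ∀ (a : A) (x y : K), ψ x (a • y) = a * ψ x y)
    -- `λ = ψ + ε·ψ* : K → K*` is injective:
    (hinj : ∀ x : K, (∀ y : K, ψ x y + ε * star (ψ y x) = 0) → x = 0)
    -- `λ = ψ + ε·ψ* : K → K*` is surjective:
    (hsurj : ∀ g : K →ₗ[A] A, ∃ x : K, ∀ y : K, g y = ψ x y + ε * star (ψ y x))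
    (L : Submodule A K)
    (hLsummand : ∃ L' : Submodule A K, IsCompl L L')
    (hLzero : ∀ x ∈ L, ∀ y ∈ L, ψ x y + ε * star (ψ y x) = 0)
    (hLperp : ∀ x : K, (∀ y ∈ L, ψ x y + ε * star (ψ y x) = 0) → x ∈ L) :
    ∃ L'' : Submodule A K, IsCompl L L'' ∧
      (∀ x ∈ L'', ∀ y ∈ L'', ψ x y + ε * star (ψ y x) = 0) ∧
      (∀ x : K, (∀ y ∈ L'', ψ x y + ε * star (ψ y x) = 0) → x ∈ L'') := by
  obtain ⟨L', hc⟩ := hLsummand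
  -- basic facts about ε
  have hεstar : star ε = ε := by rcases hε with h | h <;> simp [h]
  have hεc : ∀ r : A, ε * r = r * ε := by
    rcases hε with h | h <;> intro r <;> simp [h]
  have hεε : ε * ε = 1 := by rcases hε with h | h <;> simp [h]
  -- basic facts about ψ
  have hψ02 : ∀ x : K, ψ x 0 = 0 := by
    intro x
    have h := hadd₂ x 0 0
    rw [add_zero] at h
    exact (right_eq_add.mp h)
  have hψ01 : ∀ y : K, ψ 0 y = 0 := by
    intro y
    have h := hadd₁ 0 0 y
    rw [add_zero] at h
    exact (right_eq_add.mp h)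
  -- λ additivity in the second variable
  have hlam₂ : ∀ x u v : K, ψ x (u + v) + ε * star (ψ (u + v) x)
      = (ψ x u + ε * star (ψ u x)) + (ψ x v + ε * star (ψ v x)) := by
    intro x u v
    rw [hadd₂, hadd₁, star_add, mul_add]
    abel
  -- projections associated to the splitting K = L ⊕ L'
  set π : K →ₗ[A] K := L.subtype ∘ₗ L.projectionOnto L' hc with hπdef
  set π' : K →ₗ[A] K := L'.subtype ∘ₗ L'.projectionOnto L hc.symm with hπ'def
  have hπmem : ∀ x : K, π x ∈ L := fun x => (L.projectionOnto L' hc x).2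
  have hπ'mem : ∀ x : K, π' x ∈ L' := fun x => (L'.projectionOnto L hc.symm x).2
  have hπleft : ∀ x ∈ L, π x = x := by
    intro x hx
    simp [hπdef, Submodule.projectionOnto_apply_left hc ⟨x, hx⟩]
  have hπright : ∀ x ∈ L', π x = 0 := by
    intro x hx
    simp [hπdef, Submodule.projectionOnto_apply_right hc ⟨x, hx⟩]
  have hπ'left : ∀ x ∈ L, π' x = 0 := by
    intro x hx
    simp [hπ'def, Submodule.projectionOnto_apply_right hc.symm ⟨x, hx⟩]
  have hπ'right : ∀ x ∈ L', π' x = x := by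
    intro x hx
    simp [hπ'def, Submodule.projectionOnto_apply_left hc.symm ⟨x, hx⟩]
  -- decomposition of arbitrary elements
  have hdec : ∀ k : K, ∃ l ∈ L, ∃ y ∈ L', l + y = k := by
    intro k
    have : k ∈ L ⊔ L' := by
      rw [codisjoint_iff.mp hc.codisjoint]
      trivial
    exact Submodule.mem_sup.mp this
  have hπdec : ∀ k : K, π k + π' k = k := by
    intro k
    obtain ⟨l, hl, y, hy, hk⟩ := hdec k
    rw [← hk, map_add, map_add, hπleft l hl, hπright y hy, hπ'left l hl, hπ'right y hy]
    abel
  -- the candidate lagrangian complement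
  set L'' : Submodule A K :=
    { carrier := {x : K | ∀ y' ∈ L', ψ x y' + ε * star (ψ y' (π x)) = 0}
      add_mem' := by
        intro a b ha hb y' hy'
        have h1 := ha y' hy'
        have h2 := hb y' hy'
        rw [hadd₁, map_add, hadd₂, star_add, mul_add]
        calc ψ a y' + ψ b y' + (ε * star (ψ y' (π a)) + ε * star (ψ y' (π b)))
            = (ψ a y' + ε * star (ψ y' (π a))) + (ψ b y' + ε * star (ψ y' (π b))) := by abel
          _ = 0 := by rw [h1, h2, add_zero]
      zero_mem' := by
        intro y' _
        simp [hψ01, hψ02]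
      smul_mem' := by
        intro a x hx y' hy'
        have h1 := hx y' hy'
        rw [map_smul, hsmul₁, hsmul₂, star_mul, ← mul_assoc, ← add_mul, h1, zero_mul] }
    with hL''def
  have hmem'' : ∀ x : K, x ∈ L'' ↔ ∀ y' ∈ L', ψ x y' + ε * star (ψ y' (π x)) = 0 :=
    fun x => Iff.rfl
  -- IsCompl L L''
  have hcompl : IsCompl L L'' := by
    constructor
    · rw [Submodule.disjoint_def]
      intro x hxL hx''
      apply hinj
      intro k
      obtain ⟨l, hl, y, hy, hk⟩ := hdec k
      rw [← hk, hlam₂]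
      have h1 : ψ x l + ε * star (ψ l x) = 0 := hLzero x hxL l hl
      have h2 : ψ x y + ε * star (ψ y x) = 0 := by
        have := (hmem'' x).mp hx'' y hy
        rwa [hπleft x hxL] at this
      rw [h1, h2, add_zero]
    · rw [codisjoint_iff, eq_top_iff]
      intro k _
      obtain ⟨l, hl, y, hy, hk⟩ := hdec k
      -- find c ∈ L with λ(c)(y') = -ψ y y' for y' ∈ L'
      let ψy : K →ₗ[A] A :=
        { toFun := fun z => ψ y z
          map_add' := fun u v => hadd₂ y u v
          map_smul' := fun a z => hsmul₂ a y z }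
      obtain ⟨c, hcspec⟩ := hsurj (-(ψy ∘ₗ π'))
      have hcval : ∀ z : K, ψ c z + ε * star (ψ z c) = -(ψ y (π' z)) := by
        intro z
        have h := hcspec z
        simp only [LinearMap.neg_apply, LinearMap.comp_apply] at h
        rw [← h]
        rfl
      have hcL : c ∈ L := by
        apply hLperp
        intro u hu
        rw [hcval u, hπ'left u hu, hψ02, neg_zero]
      have hπz : π (c + y) = c := by
        rw [map_add, hπleft c hcL, hπright y hy, add_zero]
      have hzmem : (c + y) ∈ L'' := by
        rw [hmem'']
        intro y' hy'
        rw [hπz, hadd₁, add_right_comm, hcval y', hπ'right y' hy']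
        abel
      have hkk : k = (l - c) + (c + y) := by rw [← hk]; abel
      rw [hkk]
      exact Submodule.add_mem_sup (L.sub_mem hl hcL) hzmem
  -- λ vanishes on L'' × L''
  have hzero'' : ∀ x ∈ L'', ∀ z ∈ L'', ψ x z + ε * star (ψ z x) = 0 := by
    intro x hx z hz
    have hbL' : π' x ∈ L' := hπ'mem x
    have hdL' : π' z ∈ L' := hπ'mem z
    have haL : π x ∈ L := hπmem x
    have hccL : π z ∈ L := hπmem z
    set a := π x
    set b := π' x
    set cc := π z
    set d := π' z
    have h1 : ψ x d + ε * star (ψ d a) = 0 := (hmem'' x).mp hx d hdL'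
    have h2 : ψ z b + ε * star (ψ b cc) = 0 := (hmem'' z).mp hz b hbL'
    have hxab : x = a + b := (hπdec x).symm
    have hzcd : z = cc + d := (hπdec z).symm
    have hLcc : ψ a cc + ε * star (ψ cc a) = 0 := hLzero a haL cc hccL
    have e1 : ψ x z = ψ x cc + ψ x d := by conv_lhs => rw [hzcd, hadd₂]
    have e2 : ψ z x = ψ z a + ψ z b := by conv_lhs => rw [hxab, hadd₂]
    have e3 : ψ x cc = ψ a cc + ψ b cc := by conv_lhs => rw [hxab, hadd₁]
    have e4 : ψ z a = ψ cc a + ψ d a := by conv_lhs => rw [hzcd, hadd₁]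
    have hψxd : ψ x d = -(ε * star (ψ d a)) := by rw [eq_neg_iff_add_eq_zero]; exact h1
    have hψzb : ψ z b = -(ε * star (ψ b cc)) := by rw [eq_neg_iff_add_eq_zero]; exact h2
    rw [e1, e2, e4, hψxd, hψzb, e3]
    rw [star_add, star_add, star_neg, star_mul, star_star, hεstar, mul_add, mul_add, mul_neg,
      ← mul_assoc]
    rw [hεc (ψ b cc), mul_assoc, hεε, mul_one]
    calc ψ a cc + ψ b cc + -(ε * star (ψ d a)) +
          (ε * star (ψ cc a) + ε * star (ψ d a) + -(ψ b cc))
        = ψ a cc + ε * star (ψ cc a) := by abel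
      _ = 0 := hLcc
  refine ⟨L'', hcompl, hzero'', ?_⟩
  -- L''-perpendicular is contained in L''
  intro x hx
  -- decompose x = l + w with l ∈ L, w ∈ L'' using hcompl
  have hxmem : x ∈ L ⊔ L'' := by
    rw [codisjoint_iff.mp hcompl.codisjoint]
    trivial
  obtain ⟨l, hl, w, hw, hlw⟩ := Submodule.mem_sup.mp hxmem
  have hl0 : l = 0 := by
    apply hinj
    intro k
    have hkmem : k ∈ L ⊔ L'' := by
      rw [codisjoint_iff.mp hcompl.codisjoint]
      trivial
    obtain ⟨u, hu, v, hv, huv⟩ := Submodule.mem_sup.mp hkmem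
    rw [← huv, hlam₂]
    have h1 : ψ l u + ε * star (ψ u l) = 0 := hLzero l hl u hu
    have h2 : ψ l v + ε * star (ψ v l) = 0 := by
      -- λ(l)(v) = λ(x)(v) - λ(w)(v) = 0 - 0
      have hxv : ψ x v + ε * star (ψ v x) = 0 := hx v hv
      have hwv : ψ w v + ε * star (ψ v w) = 0 := hzero'' w hw v hv
      have := hlam₂ v l w  -- careful: this is λ(v)(l+w); we need λ(l+w)(v)
      -- directly: λ(l+w)(v) = λ(l)(v) + λ(w)(v)
      have hsum : ψ (l + w) v + ε * star (ψ v (l + w))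
          = (ψ l v + ε * star (ψ v l)) + (ψ w v + ε * star (ψ v w)) := by
        rw [hadd₁, hadd₂, star_add, mul_add]
        abel
      rw [hlw] at hsum
      rw [hxv, hwv, add_zero] at hsum
      exact hsum.symm
    rw [h1, h2, add_zero]
  rw [← hlw, hl0, zero_add]
  exact hw
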